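/- Let p(x) = (1 - x/x₁)⋯(1 - x/xₙ) with 0 < x₁ ≤ ⋯ ≤ xₙ and p(0)=1, and let C < 0. Then the polynomial q(x) = C·p(x) - x·p'(x) has a real zero in the open interval (0, x₁). -/

import Mathlib

open Polynomial Finset

theorem derivative_finset_prod {ι : Type*} [DecidableEq ι] (s : Finset ι) (f : ι → Polynomial ℝ) :
    Polynomial.derivative (∏ i ∈ s, f i)
      = ∑ i ∈ s, (∏ j ∈ s.erase i, f j) * Polynomial.derivative (f i) := by
  induction s using Finset.induction_on with
  | empty => simp
  | @insert a s h ih =>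
    rw [Finset.prod_insert h, Polynomial.derivative_mul, Finset.sum_insert h,
      Finset.erase_insert h, ih, Finset.mul_sum, mul_comm]
    congr 1
    refine Finset.sum_congr rfl fun i hi => ?_
    rw [Finset.erase_insert_of_ne (by rintro rfl; exact h hi),
      Finset.prod_insert (fun hmem => h (Finset.mem_of_mem_erase hmem)), mul_assoc]

theorem hyperbolic_Cp_minus_xp'_smallest_zero (n : ℕ) (hn : 0 < n) (x : Fin n → ℝ)
    (hx : ∀ i, 0 < x i) (hmono : Monotone x) (C : ℝ) (hC : C < 0) :
    ∃ r ∈ Set.Ioo (0 : ℝ) (x ⟨0, hn⟩),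
      Polynomial.eval r
        (Polynomial.C C * (∏ i : Fin n, (1 - Polynomial.C (x i)⁻¹ * Polynomial.X)) -
          Polynomial.X *
            Polynomial.derivative (∏ i : Fin n, (1 - Polynomial.C (x i)⁻¹ * Polynomial.X))) = 0 := by
  set j0 : Fin n := ⟨0, hn⟩ with hj0
  set x0 : ℝ := x j0 with hx0def
  have hx0 : 0 < x0 := hx _
  set t : ℝ := (1 - 2*C)/(2 - 2*C) with ht
  have hden : (0:ℝ) < 2 - 2*C := by linarith
  have ht0 : 0 < t := div_pos (by linarith) hden
  have ht1 : t < 1 := (div_lt_one hden).2 (by linarith)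
  have hkey : 0 < C*(1-t) + t := by
    have h2 : C*(1-t) + t = 1/2 := by
      rw [ht]; field_simp [show (1:ℝ) - C ≠ 0 by intro h; linarith]; ring
    rw [h2]; norm_num
  set y : ℝ := t * x0 with hy
  have hy0 : 0 < y := mul_pos ht0 hx0
  have hyx0 : y < x0 := by nlinarith
  set P : Polynomial ℝ := ∏ i : Fin n, (1 - Polynomial.C (x i)⁻¹ * Polynomial.X) with hP
  set Q : Polynomial ℝ := Polynomial.C C * P - Polynomial.X * Polynomial.derivative P with hQ
  -- evaluation facts
  have hevalP : ∀ z : ℝ, P.eval z = ∏ i : Fin n, (1 - (x i)⁻¹ * z) := by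
    intro z; simp [hP, Polynomial.eval_prod]
  have hderP : Polynomial.derivative P
      = ∑ j : Fin n, (∏ i ∈ Finset.univ.erase j,
          (1 - Polynomial.C (x i)⁻¹ * Polynomial.X)) * Polynomial.C (-(x j)⁻¹) := by
    rw [hP, derivative_finset_prod]
    refine Finset.sum_congr rfl fun j _ => ?_
    congr 1
    simp [Polynomial.derivative_sub]
  have hevalD : ∀ z : ℝ, (Polynomial.derivative P).eval z
      = ∑ j : Fin n, (∏ i ∈ Finset.univ.erase j, (1 - (x i)⁻¹ * z)) * (-(x j)⁻¹) := by
    intro z; rw [hderP]; simp [Polynomial.eval_finset_sum, Polynomial.eval_prod]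
  have hQ0 : Q.eval 0 = C := by
    simp [hQ, hevalP, hevalD]
  have hQ0neg : Q.eval 0 < 0 := by rw [hQ0]; exact hC
  -- positivity at y
  have hgpos : ∀ i : Fin n, 0 < 1 - (x i)⁻¹ * y := by
    intro i
    have hxi : 0 < x i := hx i
    have hle : x0 ≤ x i := hmono (Fin.mk_le_mk.mpr (Nat.zero_le _))
    have : y < x i := lt_of_lt_of_le hyx0 hle
    have h2 : (x i)⁻¹ * y < 1 := by
      rw [inv_mul_lt_iff₀ hxi]; simpa using this
    linarith
  have hQy : 0 < Q.eval y := by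
    have hev : Q.eval y = C * ∏ i : Fin n, (1 - (x i)⁻¹ * y)
        + ∑ j : Fin n, y * (x j)⁻¹ * ∏ i ∈ Finset.univ.erase j, (1 - (x i)⁻¹ * y) := by
      simp only [hQ, Polynomial.eval_sub, Polynomial.eval_mul, Polynomial.eval_C,
        Polynomial.eval_X, hevalP, hevalD, Finset.mul_sum]
      rw [sub_eq_add_neg, ← Finset.sum_neg_distrib]
      congr 1
      refine Finset.sum_congr rfl fun j _ => ?_
      ring
    set Pe : ℝ := ∏ i ∈ Finset.univ.erase j0, (1 - (x i)⁻¹ * y) with hPe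
    have hPepos : 0 < Pe := Finset.prod_pos fun i _ => hgpos i
    have hsumge : y * x0⁻¹ * Pe
        ≤ ∑ j : Fin n, y * (x j)⁻¹ * ∏ i ∈ Finset.univ.erase j, (1 - (x i)⁻¹ * y) := by
      refine Finset.single_le_sum (f := fun j => y * (x j)⁻¹ * ∏ i ∈ Finset.univ.erase j, (1 - (x i)⁻¹ * y)) ?_ (Finset.mem_univ j0)
      intro j _
      have h1 : (0:ℝ) ≤ ∏ i ∈ Finset.univ.erase j, (1 - (x i)⁻¹ * y) :=
        le_of_lt (Finset.prod_pos fun i _ => hgpos i)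
      exact mul_nonneg (mul_nonneg hy0.le (inv_nonneg.2 (hx j).le)) h1
    have hsplit : ∏ i : Fin n, (1 - (x i)⁻¹ * y) = (1 - x0⁻¹ * y) * Pe := by
      rw [hPe, ← Finset.mul_prod_erase _ _ (Finset.mem_univ j0)]
    have hyt : x0⁻¹ * y = t := by
      rw [hy]; field_simp
    have hCneg : C * ((1 - x0⁻¹ * y) * Pe) + y * x0⁻¹ * Pe = (C * (1-t) + t) * Pe := by
      rw [hyt]
      have : y * x0⁻¹ = t := by rw [mul_comm]; exact hyt
      rw [this]; ring
    have : 0 < (C * (1-t) + t) * Pe := mul_pos hkey hPepos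
    rw [hev, hsplit]
    linarith [hsumge, hCneg.symm ▸ this]
  -- IVT
  have hcont : ContinuousOn (fun z => Q.eval z) (Set.Icc 0 y) :=
    (Polynomial.continuous Q).continuousOn
  have hsub := intermediate_value_Ioo (le_of_lt hy0) hcont
  have h0mem : (0:ℝ) ∈ Set.Ioo (Q.eval 0) (Q.eval y) := ⟨hQ0neg, hQy⟩
  obtain ⟨r, hr, hr0⟩ := hsub h0mem
  refine ⟨r, ⟨hr.1, lt_trans hr.2 hyx0⟩, ?_⟩
  simpa [hQ, hP] using hr0
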